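/- Let M = ((a,b),(c,d)) ∈ SL(2,ℝ) and assume either c ≠ 0, or c = 0 and a > 0. Then w(M, M⁻¹) = 0. -/
import Mathlib


noncomputable section
open Complex

/-- j(M,z) = cz + d for a real 2×2 matrix M = ((a,b),(c,d)). -/
def j2 (M : Matrix (Fin 2) (Fin 2) ℝ) (z : ℂ) : ℂ := (M 1 0 : ℝ) * z + (M 1 1 : ℝ)

/-- The Möbius action M⟨z⟩ = (az+b)/(cz+d). -/
def act2 (M : Matrix (Fin 2) (Fin 2) ℝ) (z : ℂ) : ℂ :=
  ((M 0 0 : ℝ) * z + (M 0 1 : ℝ)) / ((M 1 0 : ℝ) * z + (M 1 1 : ℝ))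

/-- The degree-one cocycle
w(M,N) = (1/2π)(Arg j(MN,i) - Arg j(M,N⟨i⟩) - Arg j(N,i)),
where Arg is the principal argument with values in (-π,π]. -/
def w2 (M N : Matrix (Fin 2) (Fin 2) ℝ) : ℝ :=
  ((j2 (M * N) Complex.I).arg - (j2 M (act2 N Complex.I)).arg
    - (j2 N Complex.I).arg) / (2 * Real.pi)

/-- w(M,M⁻¹) = 0 if c ≠ 0, or if c = 0 and a > 0. -/
theorem stmt4 (M : Matrix (Fin 2) (Fin 2) ℝ) (hM : M.det = 1)
    (h : M 1 0 ≠ 0 ∨ (M 1 0 = 0 ∧ 0 < M 0 0)) :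
    w2 M M⁻¹ = 0 := by
  have hdet : IsUnit M.det := by rw [hM]; exact isUnit_one
  have hMinv : M⁻¹ = !![M 1 1, -M 0 1; -M 1 0, M 0 0] := by
    rw [Matrix.inv_def, hM, Matrix.adjugate_fin_two]
    simp
  have hdet' : M 0 0 * M 1 1 - M 0 1 * M 1 0 = 1 := by
    rw [Matrix.det_fin_two] at hM; exact hM
  set a := M 0 0 with ha'
  set b := M 0 1
  set c := M 1 0 with hc'
  set d := M 1 1
  have hz : ((a : ℂ) - c * I) ≠ 0 := by
    rcases h with hc | ⟨hc, hA⟩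
    · intro H
      have := congrArg Complex.im H
      simp at this
      exact hc this
    · intro H
      have := congrArg Complex.re H
      simp at this
      rw [this] at hA; exact lt_irrefl _ hA
  have h1 : j2 (M * M⁻¹) I = 1 := by
    rw [Matrix.mul_nonsing_inv M hdet]
    simp [j2, Matrix.one_apply]
  have h2 : j2 M⁻¹ I = (a : ℂ) - c * I := by
    rw [hMinv]; simp [j2]; ring
  have h3 : j2 M (act2 M⁻¹ I) = ((a : ℂ) - c * I)⁻¹ := by
    rw [hMinv]
    simp only [j2, act2, Matrix.cons_val', Matrix.cons_val_zero, Matrix.cons_val_one,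
      Matrix.head_cons, Matrix.empty_val', Matrix.cons_val_fin_one, Matrix.head_fin_const,
      Matrix.cons_val_fin_one, Matrix.of_apply, Complex.ofReal_neg]
    have hz' : (-(c:ℂ) * I + (a:ℂ)) ≠ 0 := fun H => hz (by rw [← H]; ring)
    have hdc : (a:ℂ) * d - b * c = 1 := by exact_mod_cast hdet'
    show (c:ℂ) * ((↑d * I + -↑b) / (-↑c * I + ↑a)) + (d:ℂ) = (↑a - ↑c * I)⁻¹
    rw [show (-(c:ℂ) * I + ↑a) = ↑a - ↑c * I from by ring, mul_div_assoc',
      div_add' _ _ _ hz,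
      show (c:ℂ) * (↑d * I + -↑b) + ↑d * (↑a - ↑c * I) = 1 from by linear_combination hdc,
      one_div]
  have harg : ((a : ℂ) - c * I).arg ≠ Real.pi := by
    intro H
    rw [Complex.arg_eq_pi_iff] at H
    obtain ⟨hre, him⟩ := H
    rcases h with hc | ⟨hc, hA⟩
    · apply hc; simpa using him
    · simp at hre; linarith
  rw [w2, h1, h2, h3, Complex.arg_inv, if_neg harg, Complex.arg_one]
  ring
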